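/- A Czech hat game on the complete loopless digraph on Fin n (arcs between every ordered pair of distinct vertices, so each sage sees every other sage's hat) with guessness g and hatness h is winnable if and only if ∑ i, (g i : ℚ) / (h i) ≥ 1. -/

import Mathlib

/-- A Czech hat game on the digraph with adjacency `D` (sage `v` sees sage `u`
iff `D v u`), guessness `g`, and hatness `h`, is winnable: there is a strategy
assigning to each sage `v` a set of `g v` guesses, depending only on the hats
she sees, such that for every coloring some sage guesses her own hat color. -/
def HatGame.Winnable {V : Type*} (D : V → V → Prop) (g h : V → ℕ) : Prop :=
  ∃ F : ∀ v : V, (∀ u : V, Fin (h u)) → Finset (Fin (h v)),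
    (∀ (v : V) (c c' : ∀ u : V, Fin (h u)),
        (∀ u : V, D v u → c u = c' u) → F v c = F v c') ∧
    (∀ (v : V) (c : ∀ u : V, Fin (h u)), (F v c).card = g v) ∧
    (∀ c : ∀ u : V, Fin (h u), ∃ v : V, c v ∈ F v c)


lemma exists_partial_sum_step (A : ℕ → ℕ) (n T : ℕ) (h0 : A 0 ≤ T) (hn : T < A n) :
    ∃ k, k < n ∧ A k ≤ T ∧ T < A (k + 1) := by
  induction n with
  | zero => omega
  | succ n ih =>
    by_cases hA : A n ≤ T
    · exact ⟨n, Nat.lt_succ_self n, hA, hn⟩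
    · obtain ⟨k, hk, h1, h2⟩ := ih (by omega)
      exact ⟨k, by omega, h1, h2⟩

lemma card_filter_fin_lt (h g : ℕ) (hg : g ≤ h) :
    (Finset.univ.filter fun y : Fin h => (y : ℕ) < g).card = g := by
  have : (Finset.univ.filter fun y : Fin h => (y : ℕ) < g)
      = Finset.univ.map (Fin.castLEEmb hg) := by
    ext y
    simp only [Finset.mem_filter, Finset.mem_univ, true_and, Finset.mem_map, Fin.castLEEmb,
      Function.Embedding.coeFn_mk]
    constructor
    · intro hy; exact ⟨⟨y.val, hy⟩, Fin.ext rfl⟩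
    · rintro ⟨x, rfl⟩; exact x.isLt
  rw [this, Finset.card_map, Finset.card_univ, Fintype.card_fin]

open Fin.NatCast in
lemma card_filter_mod_eq (h g m C : ℕ) (hm : 0 < m) (hg : g ≤ h) (hh : 0 < h) :
    (Finset.univ.filter fun x : Fin h => (C + (x : ℕ) * m) % (h * m) < g * m).card = g := by
  haveI : NeZero h := ⟨hh.ne'⟩
  have hr : C % m < m := Nat.mod_lt _ hm
  set q : Fin h := (((C / m) % h : ℕ) : Fin h) with hq
  have key : ∀ x : Fin h, ((C + (x : ℕ) * m) % (h * m) < g * m) =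
      (((q + x : Fin h) : ℕ) < g) := by
    intro x
    have e1 : C + (x : ℕ) * m = m * (C / m + (x : ℕ)) + C % m := by
      have h0 := Nat.div_add_mod C m
      calc C + (x:ℕ) * m = (m * (C / m) + C % m) + (x:ℕ) * m := by rw [h0]
        _ = m * (C / m + (x:ℕ)) + C % m := by ring
    set A := C / m + (x : ℕ) with hA
    have hAh : A % h < h := Nat.mod_lt _ hh
    have e2 : (m * A + C % m) % (m * h) = m * (A % h) + C % m := by
      rw [Nat.add_mod, Nat.mul_mod_mul_left,
        Nat.mod_eq_of_lt (show C % m < m * h from lt_of_lt_of_le hr (Nat.le_mul_of_pos_right m hh)),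
        Nat.mod_eq_of_lt]
      calc m * (A % h) + C % m < m * (A % h) + m := by omega
        _ = m * (A % h + 1) := by ring
        _ ≤ m * h := Nat.mul_le_mul_left m (by omega)
    have e3 : ((q + x : Fin h) : ℕ) = A % h := by
      rw [Fin.val_add, hq, Fin.val_natCast, Nat.mod_mod_of_dvd _ (dvd_refl h)]
      exact Nat.mod_add_mod _ _ _
    rw [e1, mul_comm h m, e2, e3]
    apply propext
    constructor
    · intro hlt
      by_contra hge
      push_neg at hge
      have : g * m ≤ m * (A % h) := by
        calc g * m = m * g := mul_comm _ _
          _ ≤ m * (A % h) := Nat.mul_le_mul_left m hge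
      omega
    · intro hlt
      calc m * (A % h) + C % m < m * (A % h) + m := by omega
        _ = m * (A % h + 1) := by ring
        _ ≤ m * g := Nat.mul_le_mul_left m (by omega)
        _ = g * m := mul_comm _ _
  simp only [key]
  have hcards : (Finset.univ.filter fun x : Fin h => ((q + x : Fin h) : ℕ) < g).card
      = (Finset.univ.filter fun y : Fin h => (y : ℕ) < g).card := by
    apply Finset.card_bij' (fun x _ => q + x) (fun y _ => y - q)
    · intro x hx
      simp only [Finset.mem_filter, Finset.mem_univ, true_and] at hx ⊢
      exact hx
    · intro y hy
      simp only [Finset.mem_filter, Finset.mem_univ, true_and] at hy ⊢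
      rw [add_sub_cancel]
      exact hy
    · intro x _; rw [add_sub_cancel_left]
    · intro y _; rw [add_sub_cancel]
  rw [hcards, card_filter_fin_lt h g hg]

/-- (Theorem 5 of [BDO21]) The Czech game on the complete loopless digraph on
`Fin n` is winnable iff the sum of the ratios `g i / h i` is at least 1. -/
theorem czech_complete_winnable_iff (n : ℕ) (g h : Fin n → ℕ)
    (hgh : ∀ i, 0 < g i ∧ g i < h i) :
    HatGame.Winnable (fun v u : Fin n => v ≠ u) g h ↔
      1 ≤ ∑ i : Fin n, (g i : ℚ) / (h i : ℚ) := by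
  constructor
  ·   intro W
      classical
      have hh1 : ∀ i, 0 < h i := fun i => lt_trans (hgh i).1 (hgh i).2
      have hLpos : 0 < ∏ i, h i := Finset.prod_pos fun i _ => hh1 i
      obtain ⟨F, hinv, hcard, hwin⟩ := W
      have hcardCv : ∀ v : Fin n, (Finset.univ.filter fun c : ∀ u, Fin (h u) => c v ∈ F v c).card
          = g v * ∏ j ∈ Finset.univ.erase v, h j := by
        intro v
        set e := Equiv.piSplitAt v fun u => Fin (h u) with he
        rw [Finset.card_filter, ← Equiv.sum_comp e.symm (fun c => if c v ∈ F v c then (1:ℕ) else 0),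
          Fintype.sum_prod_type, Finset.sum_comm]
        have inner : ∀ d : (j : {j // j ≠ v}) → Fin (h ↑j),
            ∑ x : Fin (h v), (if (e.symm (x, d)) v ∈ F v (e.symm (x, d)) then (1:ℕ) else 0)
              = g v := by
          intro d
          set K := F v (e.symm (⟨0, hh1 v⟩, d)) with hK
          have hFK : ∀ x : Fin (h v), F v (e.symm (x, d)) = K := by
            intro x
            apply hinv
            intro u hu
            simp only [he, Equiv.piSplitAt_symm_apply, dif_neg (Ne.symm hu)]
          have hxv : ∀ x : Fin (h v), (e.symm (x, d)) v = x := by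
            intro x; simp [he, Equiv.piSplitAt_symm_apply]
          calc ∑ x : Fin (h v), (if (e.symm (x, d)) v ∈ F v (e.symm (x, d)) then (1:ℕ) else 0)
              = ∑ x : Fin (h v), (if x ∈ K then (1:ℕ) else 0) := by
                apply Finset.sum_congr rfl; intro x _; rw [hFK x, hxv x]
            _ = (Finset.univ.filter (· ∈ K)).card := (Finset.card_filter _ _).symm
            _ = K.card := by rw [Finset.filter_univ_mem]
            _ = g v := hcard v _
        rw [Finset.sum_congr rfl fun d _ => inner d, Finset.sum_const, Finset.card_univ, smul_eq_mul,
          Fintype.card_pi]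
        simp only [Fintype.card_fin]
        rw [← Finset.prod_subtype (Finset.univ.erase v) (fun j => by simp) h]
        ring
      have cover : (Finset.univ : Finset (∀ u, Fin (h u))) ⊆
          Finset.univ.biUnion (fun v => Finset.univ.filter fun c => c v ∈ F v c) := by
        intro c _
        obtain ⟨v, hv⟩ := hwin c
        exact Finset.mem_biUnion.2 ⟨v, Finset.mem_univ v, Finset.mem_filter.2 ⟨Finset.mem_univ c, hv⟩⟩
      have hmain : (∏ i, h i) ≤ ∑ v, g v * ∏ j ∈ Finset.univ.erase v, h j := by
        have h1 := Finset.card_le_card cover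
        have h2 := Finset.card_biUnion_le (s := (Finset.univ : Finset (Fin n)))
          (t := fun v => Finset.univ.filter fun c : ∀ u, Fin (h u) => c v ∈ F v c)
        rw [Finset.card_univ, Fintype.card_pi] at h1
        simp only [Fintype.card_fin] at h1
        calc ∏ i, h i ≤ _ := h1
          _ ≤ _ := h2
          _ = _ := Finset.sum_congr rfl fun v _ => hcardCv v
      have hdiv : ∀ i : Fin n, (g i : ℚ) / (h i : ℚ)
          = ((g i * ∏ j ∈ Finset.univ.erase i, h j : ℕ) : ℚ) / ((∏ j, h j : ℕ) : ℚ) := by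
        intro i
        have hP : (∏ j ∈ Finset.univ.erase i, (h j : ℚ)) ≠ 0 :=
          Finset.prod_ne_zero_iff.2 fun j _ => by exact_mod_cast (hh1 j).ne'
        rw [← Finset.mul_prod_erase Finset.univ h (Finset.mem_univ i)]
        push_cast
        rw [mul_div_mul_right _ _ hP]
      rw [Finset.sum_congr rfl fun i _ => hdiv i, ← Finset.sum_div, ← Nat.cast_sum,
        le_div_iff₀ (by exact_mod_cast hLpos), one_mul]
      exact_mod_cast hmain
  ·   intro hsum
      classical
      have hh1 : ∀ i, 0 < h i := fun i => lt_trans (hgh i).1 (hgh i).2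
      set L : ℕ := ∏ i, h i with hLdef
      have hLpos : 0 < L := Finset.prod_pos fun i _ => hh1 i
      set m : Fin n → ℕ := fun i => ∏ j ∈ Finset.univ.erase i, h j with hmdef
      have hmL : ∀ i, h i * m i = L := fun i => Finset.mul_prod_erase _ _ (Finset.mem_univ i)
      have hmpos : ∀ i, 0 < m i := fun i => Finset.prod_pos fun j _ => hh1 j
      -- sum of lengths at least L
      have hLsum : L ≤ ∑ i, g i * m i := by
        have key : ∀ i : Fin n, (g i : ℚ) / (h i : ℚ) = ((g i * m i : ℕ) : ℚ) / ((L : ℕ) : ℚ) := by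
          intro i
          have hP : ((m i : ℕ) : ℚ) ≠ 0 := by exact_mod_cast (hmpos i).ne'
          rw [← hmL i]
          push_cast
          rw [mul_div_mul_right _ _ hP]
        rw [Finset.sum_congr rfl fun i _ => key i, ← Finset.sum_div, ← Nat.cast_sum,
          le_div_iff₀ (by exact_mod_cast hLpos), one_mul] at hsum
        exact_mod_cast hsum
      -- partial sums
      set ℓ' : ℕ → ℕ := fun k => if hk : k < n then g ⟨k, hk⟩ * m ⟨k, hk⟩ else 0 with hℓ'
      set A : ℕ → ℕ := fun k => ∑ j ∈ Finset.range k, ℓ' j with hA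
      have hAn : A n = ∑ i, g i * m i := by
        rw [show A n = ∑ j ∈ Finset.range n, ℓ' j from rfl, ← Fin.sum_univ_eq_sum_range ℓ' n]
        exact Finset.sum_congr rfl fun i _ => by simp [hℓ', i.isLt]
      -- the strategy
      set S : (v : Fin n) → (∀ u, Fin (h u)) → ℕ :=
        fun v c => ∑ j ∈ Finset.univ.erase v, (c j : ℕ) * m j with hS
      refine ⟨fun v c => Finset.univ.filter
          (fun x : Fin (h v) => (S v c + (L - A v.val % L) + (x : ℕ) * m v) % (h v * m v) < g v * m v),
        ?_, ?_, ?_⟩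
      · -- invariance
        intro v c c' hcc
        have : S v c = S v c' := by
          apply Finset.sum_congr rfl
          intro j hj
          rw [hcc j (Ne.symm (Finset.mem_erase.1 hj).1)]
        simp only [this]
      · -- cardinality
        intro v c
        exact card_filter_mod_eq (h v) (g v) (m v) _ (hmpos v) (hgh v).2.le (hh1 v)
      · -- coverage
        intro c
        set Sig : ℕ := ∑ j, (c j : ℕ) * m j with hSig
        set T : ℕ := Sig % L with hT
        have hTL : T < L := Nat.mod_lt _ hLpos
        obtain ⟨k, hk, hkT, hkT'⟩ := exists_partial_sum_step A n T (by simp [hA]) (by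
          rw [hAn]; exact lt_of_lt_of_le hTL hLsum)
        refine ⟨⟨k, hk⟩, ?_⟩
        simp only [Finset.mem_filter, Finset.mem_univ, true_and]
        set v : Fin n := ⟨k, hk⟩ with hv
        have hsplit : (c v : ℕ) * m v + S v c = Sig :=
          Finset.add_sum_erase Finset.univ (fun j => (c j : ℕ) * m j) (Finset.mem_univ v)
        have hAk : A v.val < L := lt_of_le_of_lt hkT hTL
        have hstep : T < A k + g v * m v := by
          have : A (k + 1) = A k + ℓ' k := Finset.sum_range_succ ℓ' k
          have hℓk : ℓ' k = g v * m v := by simp [hℓ', hk, hv]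
          omega
        rw [hmL v]
        have e1 : S v c + (L - A v.val % L) + (c v : ℕ) * m v = Sig + (L - A k) := by
          rw [Nat.mod_eq_of_lt hAk, show A (v : ℕ) = A k from rfl]
          omega
        rw [e1]
        have e2 : Sig + (L - A k) = L * (Sig / L + 1) + (T - A k) := by
          have h0 : L * (Sig / L) + T = Sig := by rw [hT]; exact Nat.div_add_mod Sig L
          have := hkT
          -- linear arithmetic with atom P := L * (Sig / L)
          rw [Nat.mul_add, Nat.mul_one]
          omega
        rw [e2, Nat.mul_add_mod, Nat.mod_eq_of_lt (by omega)]
        omega
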